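/- The fractional domatic number of a finite simple graph G is strictly greater than 2 if and only if the minimum degree of G is at least 2 and no connected component of G is isomorphic to the 4-cycle C₄. -/

import Mathlib

set_option linter.unusedSectionVars false


open SimpleGraph

/-- A set of vertices `D` is dominating in `G` if every vertex not in `D`
has a neighbour in `D`. -/
def Dominating {V : Type*} (G : SimpleGraph V) (D : Finset V) : Prop :=
  ∀ v : V, v ∉ D → ∃ u ∈ D, G.Adj v u

/-- A `(k,s)`-configuration of `G`: a multiset of `k` dominating sets of `G`
such that every vertex belongs to at most `s` of them. -/
def IsConfig {V : Type*} [DecidableEq V] (G : SimpleGraph V)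
    (𝒟 : Multiset (Finset V)) (k s : ℕ) : Prop :=
  Multiset.card 𝒟 = k ∧ (∀ D ∈ 𝒟, Dominating G D) ∧
    ∀ v : V, 𝒟.countP (fun D => v ∈ D) ≤ s

/-- The fractional domatic number of `G`: the supremum (attained as a maximum) of `k/s`
over all natural numbers `k`, `s ≥ 1` such that `G` admits a `(k,s)`-configuration. -/
noncomputable def fracDomatic {V : Type*} [DecidableEq V] (G : SimpleGraph V) : ℝ :=
  sSup {x : ℝ | ∃ k s : ℕ, 0 < s ∧ (∃ 𝒟 : Multiset (Finset V), IsConfig G 𝒟 k s) ∧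
    x = (k : ℝ) / (s : ℝ)}

namespace FracDomAux

variable {V : Type*} [Fintype V] [DecidableEq V] {G : SimpleGraph V}

/-- A finset is independent. -/
def Indep (G : SimpleGraph V) (I : Finset V) : Prop := ∀ a ∈ I, ∀ b ∈ I, ¬ G.Adj a b

/-- Every independent subset of `R` extends to a "relatively maximal" independent
subset of `R`: one such that every vertex of `R` outside it has a neighbour inside. -/
lemma exists_nice (G : SimpleGraph V) (R I0 : Finset V) (hI0R : I0 ⊆ R) (h0 : Indep G I0) :
    ∃ I : Finset V, I0 ⊆ I ∧ I ⊆ R ∧ Indep G I ∧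
      ∀ v ∈ R, v ∉ I → ∃ w ∈ I, G.Adj v w := by
  classical
  let s : Finset (Finset V) :=
    Finset.univ.filter (fun J => I0 ⊆ J ∧ J ⊆ R ∧ Indep G J)
  have hs : I0 ∈ s := by
    simp only [s, Finset.mem_filter, Finset.mem_univ, true_and]
    exact ⟨Finset.Subset.refl _, hI0R, h0⟩
  obtain ⟨I, hIs, hmax⟩ := Finset.exists_max_image s Finset.card ⟨I0, hs⟩
  simp only [s, Finset.mem_filter, Finset.mem_univ, true_and] at hIs
  obtain ⟨hI0I, hIR, hIind⟩ := hIs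
  refine ⟨I, hI0I, hIR, hIind, ?_⟩
  intro v hvR hvI
  by_contra hno
  push_neg at hno
  have hvnadj : ∀ w ∈ I, ¬ G.Adj v w := hno
  have hins : insert v I ∈ s := by
    simp only [s, Finset.mem_filter, Finset.mem_univ, true_and]
    refine ⟨hI0I.trans (Finset.subset_insert _ _), ?_, ?_⟩
    · intro x hx
      rcases Finset.mem_insert.1 hx with h | h
      · exact h ▸ hvR
      · exact hIR h
    · intro a ha b hb
      rcases Finset.mem_insert.1 ha with ha' | ha' <;>
        rcases Finset.mem_insert.1 hb with hb' | hb'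
      · subst ha'; subst hb'; exact G.loopless.irrefl _
      · subst ha'; exact hvnadj b hb'
      · subst hb'; exact fun h => hvnadj a ha' h.symm
      · exact hIind a ha' b hb'
  have := hmax _ hins
  have : (insert v I).card = I.card + 1 := Finset.card_insert_of_notMem hvI
  omega

lemma two_le_ncard_nbrs (hδ : ∀ v : V, 2 ≤ (G.neighborSet v).ncard) (v x : V) :
    ∃ w, G.Adj v w ∧ w ≠ x := by
  obtain ⟨b, hb, hbx⟩ :=
    Set.exists_ne_of_one_lt_ncard (lt_of_lt_of_le one_lt_two (hδ v)) x
  exact ⟨b, hb, hbx⟩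

lemma exists_nbr (hδ : ∀ v : V, 2 ≤ (G.neighborSet v).ncard) (v : V) :
    ∃ w, G.Adj v w := by
  obtain ⟨w, hw, _⟩ := two_le_ncard_nbrs hδ v v
  exact ⟨w, hw⟩

/-- The gadget property at a vertex `u`: four dominating sets covering `u` at most
once and every vertex at most twice. -/
def GadgetAt (G : SimpleGraph V) (u : V) : Prop :=
  ∃ M : Multiset (Finset V), Multiset.card M = 4 ∧ (∀ D ∈ M, Dominating G D) ∧
    (∀ w : V, M.countP (fun D => w ∈ D) ≤ 2) ∧ M.countP (fun D => u ∈ D) ≤ 1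

lemma gadget_of_four {u : V} {D1 D2 D3 D4 : Finset V}
    (h1 : Dominating G D1) (h2 : Dominating G D2)
    (h3 : Dominating G D3) (h4 : Dominating G D4)
    (hl : ∀ w : V, (if w ∈ D1 then 1 else 0) + (if w ∈ D2 then 1 else 0)
        + (if w ∈ D3 then 1 else 0) + (if w ∈ D4 then 1 else 0) ≤ 2)
    (hu : (if u ∈ D1 then 1 else 0) + (if u ∈ D2 then 1 else 0)
        + (if u ∈ D3 then 1 else 0) + (if u ∈ D4 then 1 else 0) ≤ 1) :
    GadgetAt G u := by
  classical
  refine ⟨D1 ::ₘ D2 ::ₘ D3 ::ₘ D4 ::ₘ 0, by simp, ?_, ?_, ?_⟩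
  · intro D hD
    simp only [Multiset.mem_cons, Multiset.notMem_zero, or_false] at hD
    rcases hD with rfl | rfl | rfl | rfl <;> assumption
  · intro w
    have h := hl w
    simp only [Multiset.countP_cons, Multiset.countP_zero]
    split_ifs at h ⊢ <;> omega
  · have h := hu
    simp only [Multiset.countP_cons, Multiset.countP_zero]
    split_ifs at h ⊢ <;> omega


lemma sub_gadget (hδ : ∀ v : V, 2 ≤ (G.neighborSet v).ncard)
    (u q x1 x2 z : V)
    (hux1 : G.Adj u x1) (hux2 : G.Adj u x2) (hqx1 : G.Adj q x1) (hqx2 : G.Adj q x2)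
    (huq : u ≠ q) (hx12 : ¬ G.Adj x1 x2) (hxne : x1 ≠ x2)
    (hNu : ∀ w, G.Adj u w → w = x1 ∨ w = x2)
    (hz1 : G.Adj x1 z) (hzu : z ≠ u) (hzq : z ≠ q) :
    GadgetAt G u := by
  classical
  have hux1' : u ≠ x1 := hux1.ne
  have hux2' : u ≠ x2 := hux2.ne
  have hqx1' : q ≠ x1 := hqx1.ne
  have hqx2' : q ≠ x2 := hqx2.ne
  have hzx1 : z ≠ x1 := fun h => G.loopless.irrefl x1 (h ▸ hz1)
  have hzx2 : z ≠ x2 := fun h => hx12 (h ▸ hz1)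
  set R : Finset V := Finset.univ.filter (fun v => v ≠ u ∧ v ≠ q ∧ v ≠ x1 ∧ v ≠ x2)
    with hRdef
  have hmemR : ∀ v, v ∈ R ↔ (v ≠ u ∧ v ≠ q ∧ v ≠ x1 ∧ v ≠ x2) := by
    intro v; simp [hRdef]
  have hzR : z ∈ R := (hmemR z).2 ⟨hzu, hzq, hzx1, hzx2⟩
  obtain ⟨X, -, hXR, hXind, hXnice⟩ :=
    exists_nice G R ∅ (Finset.empty_subset _) (by intro a ha; simp at ha)
  obtain ⟨Y, hzY0, hYR, hYind, hYnice⟩ :=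
    exists_nice G R {z} (Finset.singleton_subset_iff.2 hzR)
      (by intro a ha b hb; simp only [Finset.mem_singleton] at ha hb
          subst ha; subst hb; exact G.loopless.irrefl _)
  have hzY : z ∈ Y := hzY0 (Finset.mem_singleton_self z)
  have huR : u ∉ R := fun h => ((hmemR u).1 h).1 rfl
  have hqR : q ∉ R := fun h => ((hmemR q).1 h).2.1 rfl
  have hx1R : x1 ∉ R := fun h => ((hmemR x1).1 h).2.2.1 rfl
  have hx2R : x2 ∉ R := fun h => ((hmemR x2).1 h).2.2.2 rfl
  have huX : u ∉ X := fun h => huR (hXR h)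
  have hqX : q ∉ X := fun h => hqR (hXR h)
  have hx1X : x1 ∉ X := fun h => hx1R (hXR h)
  have hx2X : x2 ∉ X := fun h => hx2R (hXR h)
  have huY : u ∉ Y := fun h => huR (hYR h)
  have hqY : q ∉ Y := fun h => hqR (hYR h)
  have hx1Y : x1 ∉ Y := fun h => hx1R (hYR h)
  have hx2Y : x2 ∉ Y := fun h => hx2R (hYR h)
  -- vertices of R are not adjacent to u
  have hRnu : ∀ v ∈ R, ¬ G.Adj v u := by
    intro v hv hadj
    rcases hNu v hadj.symm with rfl | rfl
    · exact ((hmemR v).1 hv).2.2.1 rfl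
    · exact ((hmemR v).1 hv).2.2.2 rfl
  set D1 : Finset V := insert x1 (insert u X) with hD1
  set D2 : Finset V := insert x2 (insert q (R \ Y)) with hD2
  set D3 : Finset V := insert x1 (insert q (R \ X)) with hD3
  set D4 : Finset V := insert x2 Y with hD4
  have hdom1 : Dominating G D1 := by
    intro v hv
    simp only [hD1, Finset.mem_insert, not_or] at hv
    obtain ⟨hvx1, hvu, hvX⟩ := hv
    by_cases hvq : v = q
    · exact ⟨x1, by simp [hD1], hvq ▸ hqx1⟩
    by_cases hvx2 : v = x2
    · exact ⟨u, by simp [hD1], hvx2 ▸ hux2.symm⟩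
    have hvR : v ∈ R := (hmemR v).2 ⟨hvu, hvq, hvx1, hvx2⟩
    obtain ⟨w, hwX, hw⟩ := hXnice v hvR hvX
    exact ⟨w, by simp [hD1, hwX], hw⟩
  have hdom2 : Dominating G D2 := by
    intro v hv
    simp only [hD2, Finset.mem_insert, not_or] at hv
    obtain ⟨hvx2, hvq, hvRY⟩ := hv
    by_cases hvu : v = u
    · exact ⟨x2, by simp [hD2], hvu ▸ hux2⟩
    by_cases hvx1 : v = x1
    · exact ⟨q, by simp [hD2], hvx1 ▸ hqx1.symm⟩
    have hvR : v ∈ R := (hmemR v).2 ⟨hvu, hvq, hvx1, hvx2⟩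
    have hvY : v ∈ Y := by
      by_contra hvY
      exact hvRY (Finset.mem_sdiff.2 ⟨hvR, hvY⟩)
    by_cases hadjq : G.Adj v q
    · exact ⟨q, by simp [hD2], hadjq⟩
    by_cases hadjx2 : G.Adj v x2
    · exact ⟨x2, by simp [hD2], hadjx2⟩
    -- take a neighbour of v distinct from x1; it must lie in R \ Y
    obtain ⟨w, hw, hwx1⟩ := two_le_ncard_nbrs hδ v x1
    have hwu : w ≠ u := fun h => hRnu v hvR (h ▸ hw)
    have hwq : w ≠ q := fun h => hadjq (h ▸ hw)
    have hwx2 : w ≠ x2 := fun h => hadjx2 (h ▸ hw)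
    have hwR : w ∈ R := (hmemR w).2 ⟨hwu, hwq, hwx1, hwx2⟩
    have hwY : w ∉ Y := fun hwY => hYind v hvY w hwY hw
    exact ⟨w, by simp [hD2, Finset.mem_sdiff, hwR, hwY], hw⟩
  have hdom3 : Dominating G D3 := by
    intro v hv
    simp only [hD3, Finset.mem_insert, not_or] at hv
    obtain ⟨hvx1, hvq, hvRX⟩ := hv
    by_cases hvu : v = u
    · exact ⟨x1, by simp [hD3], hvu ▸ hux1⟩
    by_cases hvx2 : v = x2
    · exact ⟨q, by simp [hD3], hvx2 ▸ hqx2.symm⟩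
    have hvR : v ∈ R := (hmemR v).2 ⟨hvu, hvq, hvx1, hvx2⟩
    have hvX : v ∈ X := by
      by_contra hvX
      exact hvRX (Finset.mem_sdiff.2 ⟨hvR, hvX⟩)
    by_cases hadjq : G.Adj v q
    · exact ⟨q, by simp [hD3], hadjq⟩
    by_cases hadjx1 : G.Adj v x1
    · exact ⟨x1, by simp [hD3], hadjx1⟩
    obtain ⟨w, hw, hwx2⟩ := two_le_ncard_nbrs hδ v x2
    have hwu : w ≠ u := fun h => hRnu v hvR (h ▸ hw)
    have hwq : w ≠ q := fun h => hadjq (h ▸ hw)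
    have hwx1 : w ≠ x1 := fun h => hadjx1 (h ▸ hw)
    have hwR : w ∈ R := (hmemR w).2 ⟨hwu, hwq, hwx1, hwx2⟩
    have hwX : w ∉ X := fun hwX => hXind v hvX w hwX hw
    exact ⟨w, by simp [hD3, Finset.mem_sdiff, hwR, hwX], hw⟩
  have hdom4 : Dominating G D4 := by
    intro v hv
    simp only [hD4, Finset.mem_insert, not_or] at hv
    obtain ⟨hvx2, hvY⟩ := hv
    by_cases hvu : v = u
    · exact ⟨x2, by simp [hD4], hvu ▸ hux2⟩
    by_cases hvq : v = q
    · exact ⟨x2, by simp [hD4], hvq ▸ hqx2⟩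
    by_cases hvx1 : v = x1
    · exact ⟨z, by simp [hD4, hzY], hvx1 ▸ hz1⟩
    have hvR : v ∈ R := (hmemR v).2 ⟨hvu, hvq, hvx1, hvx2⟩
    obtain ⟨w, hwY, hw⟩ := hYnice v hvR hvY
    exact ⟨w, by simp [hD4, hwY], hw⟩
  refine gadget_of_four hdom1 hdom2 hdom3 hdom4 ?_ ?_
  · intro w
    by_cases hwu : w = u
    · subst hwu
      simp [hD1, hD2, hD3, hD4, hux1', hux2', huq, huX, huY, huR]
    by_cases hwq : w = q
    · subst hwq
      simp [hD1, hD2, hD3, hD4, hqx1', hqx2', Ne.symm huq, hqX, hqY, hqR]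
    by_cases hwx1 : w = x1
    · subst hwx1
      simp [hD1, hD2, hD3, hD4, Ne.symm hux1', Ne.symm hqx1', hxne, hx1X, hx1Y, hx1R]
    by_cases hwx2 : w = x2
    · subst hwx2
      simp [hD1, hD2, hD3, hD4, Ne.symm hux2', Ne.symm hqx2', Ne.symm hxne, hx2X, hx2Y, hx2R]
    have hwR : w ∈ R := (hmemR w).2 ⟨hwu, hwq, hwx1, hwx2⟩
    by_cases hwX : w ∈ X <;> by_cases hwY : w ∈ Y <;>
      simp [hD1, hD2, hD3, hD4, hwu, hwq, hwx1, hwx2, hwX, hwY, hwR]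
  · simp [hD1, hD2, hD3, hD4, hux1', hux2', huq, huX, huY, huR]


lemma subB_gadget (hδ : ∀ v : V, 2 ≤ (G.neighborSet v).ncard)
    (u q x1 x2 r : V)
    (hux1 : G.Adj u x1) (hux2 : G.Adj u x2) (hqx1 : G.Adj q x1) (hqx2 : G.Adj q x2)
    (huq : u ≠ q) (hnadjuq : ¬ G.Adj u q) (hxne : x1 ≠ x2)
    (hNu : ∀ w, G.Adj u w → w = x1 ∨ w = x2)
    (hNx1 : ∀ w, G.Adj x1 w → w = u ∨ w = q)
    (hNx2 : ∀ w, G.Adj x2 w → w = u ∨ w = q)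
    (hqr : G.Adj q r) (hr1 : r ≠ x1) (hr2 : r ≠ x2) :
    GadgetAt G u := by
  classical
  have hux1' : u ≠ x1 := hux1.ne
  have hux2' : u ≠ x2 := hux2.ne
  have hqx1' : q ≠ x1 := hqx1.ne
  have hqx2' : q ≠ x2 := hqx2.ne
  have hru : r ≠ u := fun h => hnadjuq (h ▸ hqr).symm
  have hrq : r ≠ q := Ne.symm hqr.ne
  set R : Finset V := Finset.univ.filter (fun v => v ≠ u ∧ v ≠ q ∧ v ≠ x1 ∧ v ≠ x2)
    with hRdef
  have hmemR : ∀ v, v ∈ R ↔ (v ≠ u ∧ v ≠ q ∧ v ≠ x1 ∧ v ≠ x2) := by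
    intro v; simp [hRdef]
  have hrR : r ∈ R := (hmemR r).2 ⟨hru, hrq, hr1, hr2⟩
  obtain ⟨X, -, hXR, hXind, hXnice⟩ :=
    exists_nice G R ∅ (Finset.empty_subset _) (by intro a ha; simp at ha)
  obtain ⟨Y, hrY0, hYR, hYind, hYnice⟩ :=
    exists_nice G R {r} (Finset.singleton_subset_iff.2 hrR)
      (by intro a ha b hb; simp only [Finset.mem_singleton] at ha hb
          subst ha; subst hb; exact G.loopless.irrefl _)
  have hrY : r ∈ Y := hrY0 (Finset.mem_singleton_self r)
  have huR : u ∉ R := fun h => ((hmemR u).1 h).1 rfl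
  have hqR : q ∉ R := fun h => ((hmemR q).1 h).2.1 rfl
  have hx1R : x1 ∉ R := fun h => ((hmemR x1).1 h).2.2.1 rfl
  have hx2R : x2 ∉ R := fun h => ((hmemR x2).1 h).2.2.2 rfl
  have huX : u ∉ X := fun h => huR (hXR h)
  have hqX : q ∉ X := fun h => hqR (hXR h)
  have hx1X : x1 ∉ X := fun h => hx1R (hXR h)
  have hx2X : x2 ∉ X := fun h => hx2R (hXR h)
  have huY : u ∉ Y := fun h => huR (hYR h)
  have hqY : q ∉ Y := fun h => hqR (hYR h)
  have hx1Y : x1 ∉ Y := fun h => hx1R (hYR h)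
  have hx2Y : x2 ∉ Y := fun h => hx2R (hYR h)
  have hRnu : ∀ v ∈ R, ¬ G.Adj v u := by
    intro v hv hadj
    rcases hNu v hadj.symm with rfl | rfl
    · exact ((hmemR v).1 hv).2.2.1 rfl
    · exact ((hmemR v).1 hv).2.2.2 rfl
  have hRnx1 : ∀ v ∈ R, ¬ G.Adj v x1 := by
    intro v hv hadj
    rcases hNx1 v hadj.symm with rfl | rfl
    · exact ((hmemR v).1 hv).1 rfl
    · exact ((hmemR v).1 hv).2.1 rfl
  have hRnx2 : ∀ v ∈ R, ¬ G.Adj v x2 := by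
    intro v hv hadj
    rcases hNx2 v hadj.symm with rfl | rfl
    · exact ((hmemR v).1 hv).1 rfl
    · exact ((hmemR v).1 hv).2.1 rfl
  set D1 : Finset V := insert x1 (insert q X) with hD1
  set D2 : Finset V := insert x2 (insert q (R \ X)) with hD2
  set D3 : Finset V := insert x1 (insert x2 (R \ Y)) with hD3
  set D4 : Finset V := insert u Y with hD4
  have hdom1 : Dominating G D1 := by
    intro v hv
    simp only [hD1, Finset.mem_insert, not_or] at hv
    obtain ⟨hvx1, hvq, hvX⟩ := hv
    by_cases hvu : v = u
    · exact ⟨x1, by simp [hD1], hvu ▸ hux1⟩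
    by_cases hvx2 : v = x2
    · exact ⟨q, by simp [hD1], hvx2 ▸ hqx2.symm⟩
    have hvR : v ∈ R := (hmemR v).2 ⟨hvu, hvq, hvx1, hvx2⟩
    obtain ⟨w, hwX, hw⟩ := hXnice v hvR hvX
    exact ⟨w, by simp [hD1, hwX], hw⟩
  have hdom2 : Dominating G D2 := by
    intro v hv
    simp only [hD2, Finset.mem_insert, not_or] at hv
    obtain ⟨hvx2, hvq, hvRX⟩ := hv
    by_cases hvu : v = u
    · exact ⟨x2, by simp [hD2], hvu ▸ hux2⟩
    by_cases hvx1 : v = x1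
    · exact ⟨q, by simp [hD2], hvx1 ▸ hqx1.symm⟩
    have hvR : v ∈ R := (hmemR v).2 ⟨hvu, hvq, hvx1, hvx2⟩
    have hvX : v ∈ X := by
      by_contra hvX
      exact hvRX (Finset.mem_sdiff.2 ⟨hvR, hvX⟩)
    by_cases hadjq : G.Adj v q
    · exact ⟨q, by simp [hD2], hadjq⟩
    obtain ⟨w, hw⟩ := exists_nbr hδ v
    have hwu : w ≠ u := fun h => hRnu v hvR (h ▸ hw)
    have hwq : w ≠ q := fun h => hadjq (h ▸ hw)
    have hwx1 : w ≠ x1 := fun h => hRnx1 v hvR (h ▸ hw)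
    have hwx2 : w ≠ x2 := fun h => hRnx2 v hvR (h ▸ hw)
    have hwR : w ∈ R := (hmemR w).2 ⟨hwu, hwq, hwx1, hwx2⟩
    have hwX : w ∉ X := fun hwX => hXind v hvX w hwX hw
    exact ⟨w, by simp [hD2, Finset.mem_sdiff, hwR, hwX], hw⟩
  have hdom3 : Dominating G D3 := by
    intro v hv
    simp only [hD3, Finset.mem_insert, not_or] at hv
    obtain ⟨hvx1, hvx2, hvRY⟩ := hv
    by_cases hvu : v = u
    · exact ⟨x1, by simp [hD3], hvu ▸ hux1⟩
    by_cases hvq : v = q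
    · exact ⟨x1, by simp [hD3], hvq ▸ hqx1⟩
    have hvR : v ∈ R := (hmemR v).2 ⟨hvu, hvq, hvx1, hvx2⟩
    have hvY : v ∈ Y := by
      by_contra hvY
      exact hvRY (Finset.mem_sdiff.2 ⟨hvR, hvY⟩)
    obtain ⟨w, hw, hwq⟩ := two_le_ncard_nbrs hδ v q
    have hwu : w ≠ u := fun h => hRnu v hvR (h ▸ hw)
    have hwx1 : w ≠ x1 := fun h => hRnx1 v hvR (h ▸ hw)
    have hwx2 : w ≠ x2 := fun h => hRnx2 v hvR (h ▸ hw)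
    have hwR : w ∈ R := (hmemR w).2 ⟨hwu, hwq, hwx1, hwx2⟩
    have hwY : w ∉ Y := fun hwY => hYind v hvY w hwY hw
    exact ⟨w, by simp [hD3, Finset.mem_sdiff, hwR, hwY], hw⟩
  have hdom4 : Dominating G D4 := by
    intro v hv
    simp only [hD4, Finset.mem_insert, not_or] at hv
    obtain ⟨hvu, hvY⟩ := hv
    by_cases hvx1 : v = x1
    · exact ⟨u, by simp [hD4], hvx1 ▸ hux1.symm⟩
    by_cases hvx2 : v = x2
    · exact ⟨u, by simp [hD4], hvx2 ▸ hux2.symm⟩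
    by_cases hvq : v = q
    · exact ⟨r, by simp [hD4, hrY], hvq ▸ hqr⟩
    have hvR : v ∈ R := (hmemR v).2 ⟨hvu, hvq, hvx1, hvx2⟩
    obtain ⟨w, hwY, hw⟩ := hYnice v hvR hvY
    exact ⟨w, by simp [hD4, hwY], hw⟩
  refine gadget_of_four hdom1 hdom2 hdom3 hdom4 ?_ ?_
  · intro w
    by_cases hwu : w = u
    · subst hwu
      simp [hD1, hD2, hD3, hD4, hux1', hux2', huq, huX, huY, huR]
    by_cases hwq : w = q
    · subst hwq
      simp [hD1, hD2, hD3, hD4, hqx1', hqx2', Ne.symm huq, hqX, hqY, hqR]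
    by_cases hwx1 : w = x1
    · subst hwx1
      simp [hD1, hD2, hD3, hD4, Ne.symm hux1', Ne.symm hqx1', hxne, hx1X, hx1Y, hx1R]
    by_cases hwx2 : w = x2
    · subst hwx2
      simp [hD1, hD2, hD3, hD4, Ne.symm hux2', Ne.symm hqx2', Ne.symm hxne, hx2X, hx2Y, hx2R]
    have hwR : w ∈ R := (hmemR w).2 ⟨hwu, hwq, hwx1, hwx2⟩
    by_cases hwX : w ∈ X <;> by_cases hwY : w ∈ Y <;>
      simp [hD1, hD2, hD3, hD4, hwu, hwq, hwx1, hwx2, hwX, hwY, hwR]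
  · simp [hD1, hD2, hD3, hD4, hux1', hux2', huq, huX, huY, huR]


def quadMap (u x1 q x2 v : V) : Fin 4 :=
  if v = u then 0 else if v = x1 then 1 else if v = q then 2 else 3

lemma quadMap_u {u x1 q x2 : V} : quadMap u x1 q x2 u = 0 := if_pos rfl

lemma quadMap_x1 {u x1 q x2 : V} (h : x1 ≠ u) : quadMap u x1 q x2 x1 = 1 := by
  rw [quadMap, if_neg h, if_pos rfl]

lemma quadMap_q {u x1 q x2 : V} (h1 : q ≠ u) (h2 : q ≠ x1) : quadMap u x1 q x2 q = 2 := by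
  rw [quadMap, if_neg h1, if_neg h2, if_pos rfl]

lemma quadMap_x2 {u x1 q x2 : V} (h1 : x2 ≠ u) (h2 : x2 ≠ x1) (h3 : x2 ≠ q) :
    quadMap u x1 q x2 x2 = 3 := by
  rw [quadMap, if_neg h1, if_neg h2, if_neg h3]

lemma c4_iso (u q x1 x2 : V)
    (hux1 : G.Adj u x1) (hux2 : G.Adj u x2) (hqx1 : G.Adj q x1) (hqx2 : G.Adj q x2)
    (huq : u ≠ q) (hnadjuq : ¬ G.Adj u q) (hxne : x1 ≠ x2) (hx12 : ¬ G.Adj x1 x2)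
    (hNu : ∀ w, G.Adj u w → w = x1 ∨ w = x2)
    (hNq : ∀ w, G.Adj q w → w = x1 ∨ w = x2)
    (hNx1 : ∀ w, G.Adj x1 w → w = u ∨ w = q)
    (hNx2 : ∀ w, G.Adj x2 w → w = u ∨ w = q) :
    Nonempty (G.induce (G.connectedComponentMk u).supp ≃g cycleGraph 4) := by
  classical
  have hux1' : u ≠ x1 := hux1.ne
  have hux2' : u ≠ x2 := hux2.ne
  have hqx1' : q ≠ x1 := hqx1.ne
  have hqx2' : q ≠ x2 := hqx2.ne
  set S : Set V := {u, x1, q, x2} with hSdef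
  have hmemS : ∀ v, v ∈ S ↔ (v = u ∨ v = x1 ∨ v = q ∨ v = x2) := by
    intro v; simp [hSdef]
  have huS : u ∈ S := (hmemS u).2 (Or.inl rfl)
  have hx1S : x1 ∈ S := (hmemS x1).2 (Or.inr (Or.inl rfl))
  have hqS : q ∈ S := (hmemS q).2 (Or.inr (Or.inr (Or.inl rfl)))
  have hx2S : x2 ∈ S := (hmemS x2).2 (Or.inr (Or.inr (Or.inr rfl)))
  have hclosed : ∀ a ∈ S, ∀ b, G.Adj a b → b ∈ S := by
    intro a ha b hab
    rcases (hmemS a).1 ha with rfl | rfl | rfl | rfl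
    · rcases hNu b hab with rfl | rfl
      · exact hx1S
      · exact hx2S
    · rcases hNx1 b hab with rfl | rfl
      · exact huS
      · exact hqS
    · rcases hNq b hab with rfl | rfl
      · exact hx1S
      · exact hx2S
    · rcases hNx2 b hab with rfl | rfl
      · exact huS
      · exact hqS
  have hwalk : ∀ (a b : V), G.Walk a b → a ∈ S → b ∈ S := by
    intro a b w
    induction w with
    | nil => exact id
    | cons h p ih => exact fun ha => ih (hclosed _ ha _ h)
  have hsupp : (G.connectedComponentMk u).supp = S := by
    ext v
    rw [ConnectedComponent.mem_supp_iff]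
    constructor
    · intro h
      obtain ⟨p⟩ := (ConnectedComponent.exact h).symm
      exact hwalk u v p huS
    · intro hv
      rcases (hmemS v).1 hv with rfl | rfl | rfl | rfl
      · rfl
      · exact ConnectedComponent.sound hux1.symm.reachable
      · exact ConnectedComponent.sound ((hqx1.reachable).trans hux1.symm.reachable)
      · exact ConnectedComponent.sound hux2.symm.reachable
  rw [hsupp]
  refine ⟨?_⟩
  refine
    { toFun := fun v => quadMap u x1 q x2 v.1
      invFun := ![⟨u, huS⟩, ⟨x1, hx1S⟩, ⟨q, hqS⟩, ⟨x2, hx2S⟩]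
      left_inv := ?_
      right_inv := ?_
      map_rel_iff' := ?_ }
  · rintro ⟨v, hv⟩
    rcases (hmemS v).1 hv with rfl | rfl | rfl | rfl <;> dsimp only
    · rw [quadMap_u]; rfl
    · rw [quadMap_x1 (Ne.symm hux1')]; rfl
    · rw [quadMap_q (Ne.symm huq) hqx1']; rfl
    · rw [quadMap_x2 (Ne.symm hux2') (Ne.symm hxne) (Ne.symm hqx2')]; rfl
  · intro i
    fin_cases i
    · exact quadMap_u
    · exact quadMap_x1 (Ne.symm hux1')
    · exact quadMap_q (Ne.symm huq) hqx1'
    · exact quadMap_x2 (Ne.symm hux2') (Ne.symm hxne) (Ne.symm hqx2')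
  · rintro ⟨a, ha⟩ ⟨b, hb⟩
    simp only [Equiv.coe_fn_mk, comap_adj, Function.Embedding.coe_subtype]
    have e1 : quadMap u x1 q x2 u = 0 := quadMap_u
    have e2 : quadMap u x1 q x2 x1 = 1 := quadMap_x1 (Ne.symm hux1')
    have e3 : quadMap u x1 q x2 q = 2 := quadMap_q (Ne.symm huq) hqx1'
    have e4 : quadMap u x1 q x2 x2 = 3 :=
      quadMap_x2 (Ne.symm hux2') (Ne.symm hxne) (Ne.symm hqx2')
    rcases (hmemS a).1 ha with rfl | rfl | rfl | rfl <;>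
      rcases (hmemS b).1 hb with rfl | rfl | rfl | rfl
    · rw [e1]; exact iff_of_false (by decide) (G.loopless.irrefl _)
    · rw [e1, e2]; exact iff_of_true (by decide) hux1
    · rw [e1, e3]; exact iff_of_false (by decide) hnadjuq
    · rw [e1, e4]; exact iff_of_true (by decide) hux2
    · rw [e2, e1]; exact iff_of_true (by decide) hux1.symm
    · rw [e2]; exact iff_of_false (by decide) (G.loopless.irrefl _)
    · rw [e2, e3]; exact iff_of_true (by decide) hqx1.symm
    · rw [e2, e4]; exact iff_of_false (by decide) hx12
    · rw [e3, e1]; exact iff_of_false (by decide) (fun h => hnadjuq h.symm)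
    · rw [e3, e2]; exact iff_of_true (by decide) hqx1
    · rw [e3]; exact iff_of_false (by decide) (G.loopless.irrefl _)
    · rw [e3, e4]; exact iff_of_true (by decide) hqx2
    · rw [e4, e1]; exact iff_of_true (by decide) hux2.symm
    · rw [e4, e2]; exact iff_of_false (by decide) (fun h => hx12 h.symm)
    · rw [e4, e3]; exact iff_of_true (by decide) hqx2.symm
    · rw [e4]; exact iff_of_false (by decide) (G.loopless.irrefl _)


lemma gadget_at (hδ : ∀ v : V, 2 ≤ (G.neighborSet v).ncard)
    (hC4 : ∀ c : G.ConnectedComponent, ¬ Nonempty (G.induce c.supp ≃g cycleGraph 4))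
    (u : V) : GadgetAt G u := by
  classical
  by_cases hα : ∃ I : Finset V, (Indep G I ∧ ∀ v, v ∉ I → ∃ w ∈ I, G.Adj v w) ∧
      u ∉ I ∧ ∃ w, G.Adj u w ∧ w ∉ I
  · -- case α : a maximal independent set missing u and a neighbour of u
    obtain ⟨I, ⟨hind, hnice⟩, huI, w0, hw0adj, hw0I⟩ := hα
    set B : Finset V := Finset.univ.filter (fun v => v ∉ I ∧ v ≠ u) with hBdef
    have hmemB : ∀ v, v ∈ B ↔ (v ∉ I ∧ v ≠ u) := by intro v; simp [hBdef]
    have hdomI : Dominating G I := fun v hv => hnice v hv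
    have hdomB : Dominating G B := by
      intro v hv
      by_cases hvI : v ∈ I
      · obtain ⟨b, hb, hbu⟩ := two_le_ncard_nbrs hδ v u
        have hbI : b ∉ I := fun h => hind v hvI b h hb
        exact ⟨b, (hmemB b).2 ⟨hbI, hbu⟩, hb⟩
      · have hvu : v = u := by
          by_contra hvu
          exact hv ((hmemB v).2 ⟨hvI, hvu⟩)
        exact ⟨w0, (hmemB w0).2 ⟨hw0I, hw0adj.ne.symm⟩, hvu ▸ hw0adj⟩
    have hIB : ∀ x, x ∈ I → x ∉ B := fun x hx hb => ((hmemB x).1 hb).1 hx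
    have huB : u ∉ B := fun hb => ((hmemB u).1 hb).2 rfl
    refine gadget_of_four hdomI hdomB hdomI hdomB ?_ ?_
    · intro w
      by_cases hwI : w ∈ I
      · simp [hwI, hIB w hwI]
      · by_cases hwB : w ∈ B <;> simp [hwI, hwB]
    · simp [huI, huB]
  · -- case ¬α
    have hα' : ∀ I : Finset V, (Indep G I ∧ ∀ v, v ∉ I → ∃ w ∈ I, G.Adj v w) →
        u ∉ I → ∀ w, G.Adj u w → w ∈ I := by
      intro I h1 h2 w hw
      by_contra hwI
      exact hα ⟨I, h1, h2, w, hw, hwI⟩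
    obtain ⟨x1, hux1⟩ := exists_nbr hδ u
    obtain ⟨I, hx1I0, -, hind, hniceR⟩ :=
      exists_nice G Finset.univ {x1} (Finset.subset_univ _)
        (by intro a ha b hb; simp only [Finset.mem_singleton] at ha hb
            subst ha; subst hb; exact G.loopless.irrefl _)
    have hnice : ∀ v, v ∉ I → ∃ w ∈ I, G.Adj v w :=
      fun v hv => hniceR v (Finset.mem_univ v) hv
    have hx1I : x1 ∈ I := hx1I0 (Finset.mem_singleton_self _)
    have huI : u ∉ I := fun h => hind u h x1 hx1I hux1
    have hW : ∀ w, G.Adj u w → w ∈ I := hα' I ⟨hind, hnice⟩ huI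
    obtain ⟨x2, hux2, hx21⟩ := two_le_ncard_nbrs hδ u x1
    have hx2I : x2 ∈ I := hW x2 hux2
    have hxne : x1 ≠ x2 := Ne.symm hx21
    have hx12 : ¬ G.Adj x1 x2 := hind x1 hx1I x2 hx2I
    have hux1' : u ≠ x1 := hux1.ne
    have hux2' : u ≠ x2 := hux2.ne
    set B : Finset V := Finset.univ.filter (fun v => v ∉ I ∧ v ≠ u) with hBdef
    have hmemB : ∀ v, v ∈ B ↔ (v ∉ I ∧ v ≠ u) := by intro v; simp [hBdef]
    have hIB : ∀ x, x ∈ I → x ∉ B := fun x hx hb => ((hmemB x).1 hb).1 hx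
    have huB : u ∉ B := fun hb => ((hmemB u).1 hb).2 rfl
    -- the key exchange lemma: no vertex of B has all its I-neighbours equal to a
    -- single neighbour x of u (provided u has another neighbour x')
    have key : ∀ x x' : V, x ∈ I → x' ∈ I → x ≠ x' → G.Adj u x → G.Adj u x' →
        ∀ v, v ∈ B → (∀ y ∈ I, G.Adj v y → y = x) → False := by
      intro x x' hxI hx'I hxx' hux hux' v hvB hvx
      have hvI : v ∉ I := ((hmemB v).1 hvB).1
      have hvadjx : G.Adj v x := by
        obtain ⟨y, hyI, hy⟩ := hnice v hvI
        exact (hvx y hyI hy) ▸ hy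
      have hJ0ind : Indep G (insert v (I.erase x)) := by
        intro a ha b hb
        rcases Finset.mem_insert.1 ha with rfl | ha' <;>
          rcases Finset.mem_insert.1 hb with rfl | hb'
        · exact G.loopless.irrefl _
        · intro hadj
          exact (Finset.ne_of_mem_erase hb') (hvx b (Finset.mem_of_mem_erase hb') hadj)
        · intro hadj
          exact (Finset.ne_of_mem_erase ha') (hvx a (Finset.mem_of_mem_erase ha') hadj.symm)
        · exact hind a (Finset.mem_of_mem_erase ha') b (Finset.mem_of_mem_erase hb')
      obtain ⟨J, hJ0J, -, hJind, hJniceR⟩ :=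
        exists_nice G Finset.univ (insert v (I.erase x)) (Finset.subset_univ _) hJ0ind
      have hvJ : v ∈ J := hJ0J (Finset.mem_insert_self _ _)
      have hx'J : x' ∈ J :=
        hJ0J (Finset.mem_insert.2 (Or.inr (Finset.mem_erase.2 ⟨Ne.symm hxx', hx'I⟩)))
      have huJ : u ∉ J := fun h => hJind u h x' hx'J hux'
      have hxJ : x ∈ J :=
        hα' J ⟨hJind, fun w hw => hJniceR w (Finset.mem_univ w) hw⟩ huJ x hux
      exact hJind x hxJ v hvJ hvadjx.symm
    set Q : Finset V := B.filter (fun v => ∀ y ∈ I, G.Adj v y → (y = x1 ∨ y = x2))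
      with hQdef
    by_cases hQ : Q = ∅
    · -- case β₁ : no vertex of B sees only x1, x2 inside I
      set A2 : Finset V := insert u ((I.erase x1).erase x2) with hA2
      set B1 : Finset V := insert x1 B with hB1
      set B2 : Finset V := insert x2 B with hB2
      have hdomA : Dominating G I := fun v hv => hnice v hv
      have hdomA2 : Dominating G A2 := by
        intro v hv
        simp only [hA2, Finset.mem_insert, not_or, Finset.mem_erase] at hv
        obtain ⟨hvu, hv2⟩ := hv
        by_cases hvI : v ∈ I
        · -- v must be x1 or x2
          by_cases hvx2 : v = x2
          · exact ⟨u, by simp [hA2], hvx2 ▸ hux2.symm⟩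
          · have hvx1 : v = x1 := by
              by_contra hvx1
              exact hv2 ⟨hvx2, hvx1, hvI⟩
            exact ⟨u, by simp [hA2], hvx1 ▸ hux1.symm⟩
        · have hvB : v ∈ B := (hmemB v).2 ⟨hvI, hvu⟩
          have hvQ : v ∉ Q := by rw [hQ]; exact Finset.notMem_empty v
          rw [hQdef, Finset.mem_filter] at hvQ
          push_neg at hvQ
          obtain ⟨y, hyI, hy, hy1, hy2⟩ := hvQ hvB
          refine ⟨y, ?_, hy⟩
          simp only [hA2, Finset.mem_insert, Finset.mem_erase]
          exact Or.inr ⟨hy2, hy1, hyI⟩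
      have hdomB1 : Dominating G B1 := by
        intro v hv
        simp only [hB1, Finset.mem_insert, not_or] at hv
        obtain ⟨hvx1, hvB⟩ := hv
        by_cases hvI : v ∈ I
        · obtain ⟨b, hb, hbu⟩ := two_le_ncard_nbrs hδ v u
          have hbI : b ∉ I := fun h => hind v hvI b h hb
          exact ⟨b, by simp [hB1, (hmemB b).2 ⟨hbI, hbu⟩], hb⟩
        · have hvu : v = u := by
            by_contra hvu
            exact hvB ((hmemB v).2 ⟨hvI, hvu⟩)
          exact ⟨x1, by simp [hB1], hvu ▸ hux1⟩
      have hdomB2 : Dominating G B2 := by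
        intro v hv
        simp only [hB2, Finset.mem_insert, not_or] at hv
        obtain ⟨hvx2, hvB⟩ := hv
        by_cases hvI : v ∈ I
        · obtain ⟨b, hb, hbu⟩ := two_le_ncard_nbrs hδ v u
          have hbI : b ∉ I := fun h => hind v hvI b h hb
          exact ⟨b, by simp [hB2, (hmemB b).2 ⟨hbI, hbu⟩], hb⟩
        · have hvu : v = u := by
            by_contra hvu
            exact hvB ((hmemB v).2 ⟨hvI, hvu⟩)
          exact ⟨x2, by simp [hB2], hvu ▸ hux2⟩
      refine gadget_of_four hdomA hdomA2 hdomB1 hdomB2 ?_ ?_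
      · intro w
        by_cases hwu : w = u
        · subst hwu
          simp [hA2, hB1, hB2, huI, huB, hux1', hux2']
        by_cases hwx1 : w = x1
        · rw [hwx1]
          simp [hA2, hB1, hB2, hx1I, hIB x1 hx1I, Ne.symm hux1', hxne]
        by_cases hwx2 : w = x2
        · rw [hwx2]
          simp [hA2, hB1, hB2, hx2I, hIB x2 hx2I, Ne.symm hux2', Ne.symm hxne]
        by_cases hwI : w ∈ I
        · simp [hA2, hB1, hB2, hwI, hIB w hwI, hwu, hwx1, hwx2]
        · have hwB : w ∈ B := (hmemB w).2 ⟨hwI, hwu⟩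
          simp [hA2, hB1, hB2, hwI, hwB, hwu, hwx1, hwx2]
      · simp [hA2, hB1, hB2, huI, huB, hux1', hux2']
    · -- case β₂ : some q ∈ B sees only x1, x2 inside I
      obtain ⟨q, hqQ⟩ := Finset.nonempty_iff_ne_empty.2 hQ
      rw [hQdef, Finset.mem_filter] at hqQ
      obtain ⟨hqB, hqprop⟩ := hqQ
      have hqI : q ∉ I := ((hmemB q).1 hqB).1
      have hqu : q ≠ u := ((hmemB q).1 hqB).2
      have huq : u ≠ q := Ne.symm hqu
      have hadjq1 : G.Adj q x1 := by
        by_contra hc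
        refine key x2 x1 hx2I hx1I (Ne.symm hxne) hux2 hux1 q hqB ?_
        intro y hyI hy
        rcases hqprop y hyI hy with rfl | rfl
        · exact absurd hy hc
        · rfl
      have hadjq2 : G.Adj q x2 := by
        by_contra hc
        refine key x1 x2 hx1I hx2I hxne hux1 hux2 q hqB ?_
        intro y hyI hy
        rcases hqprop y hyI hy with rfl | rfl
        · rfl
        · exact absurd hy hc
      have hnadjuq : ¬ G.Adj u q := fun h => hqI (hW q h)
      have hNu : ∀ w, G.Adj u w → w = x1 ∨ w = x2 := by
        intro w hw
        by_contra hc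
        push_neg at hc
        obtain ⟨hw1, hw2⟩ := hc
        have hwI : w ∈ I := hW w hw
        have hJ0ind : Indep G (insert q ((I.erase x1).erase x2)) := by
          intro a ha b hb
          rcases Finset.mem_insert.1 ha with rfl | ha' <;>
            rcases Finset.mem_insert.1 hb with rfl | hb'
          · exact G.loopless.irrefl _
          · intro hadj
            have hbI := Finset.mem_of_mem_erase (Finset.mem_of_mem_erase hb')
            rcases hqprop b hbI hadj with rfl | rfl
            · exact (Finset.ne_of_mem_erase (Finset.mem_of_mem_erase hb')) rfl
            · exact (Finset.ne_of_mem_erase hb') rfl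
          · intro hadj
            have haI := Finset.mem_of_mem_erase (Finset.mem_of_mem_erase ha')
            rcases hqprop a haI hadj.symm with rfl | rfl
            · exact (Finset.ne_of_mem_erase (Finset.mem_of_mem_erase ha')) rfl
            · exact (Finset.ne_of_mem_erase ha') rfl
          · exact hind a (Finset.mem_of_mem_erase (Finset.mem_of_mem_erase ha'))
              b (Finset.mem_of_mem_erase (Finset.mem_of_mem_erase hb'))
        obtain ⟨J, hJ0J, -, hJind, hJniceR⟩ :=
          exists_nice G Finset.univ _ (Finset.subset_univ _) hJ0ind
        have hqJ : q ∈ J := hJ0J (Finset.mem_insert_self _ _)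
        have hwJ : w ∈ J := hJ0J (Finset.mem_insert.2 (Or.inr
          (Finset.mem_erase.2 ⟨hw2, Finset.mem_erase.2 ⟨hw1, hwI⟩⟩)))
        have huJ : u ∉ J := fun h => hJind u h w hwJ hw
        have hx1J : x1 ∈ J :=
          hα' J ⟨hJind, fun a haJ => hJniceR a (Finset.mem_univ a) haJ⟩ huJ x1 hux1
        exact hJind x1 hx1J q hqJ hadjq1.symm
      by_cases hz1 : ∃ z, G.Adj x1 z ∧ z ≠ u ∧ z ≠ q
      · obtain ⟨z, h1, h2, h3⟩ := hz1
        exact sub_gadget hδ u q x1 x2 z hux1 hux2 hadjq1 hadjq2 huq hx12 hxne hNu h1 h2 h3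
      by_cases hz2 : ∃ z, G.Adj x2 z ∧ z ≠ u ∧ z ≠ q
      · obtain ⟨z, h1, h2, h3⟩ := hz2
        exact sub_gadget hδ u q x2 x1 z hux2 hux1 hadjq2 hadjq1 huq
          (fun h => hx12 h.symm) (Ne.symm hxne)
          (fun w hw => Or.symm (hNu w hw)) h1 h2 h3
      have hNx1 : ∀ w, G.Adj x1 w → w = u ∨ w = q := by
        intro w hw
        by_contra hc
        push_neg at hc
        exact hz1 ⟨w, hw, hc.1, hc.2⟩
      have hNx2 : ∀ w, G.Adj x2 w → w = u ∨ w = q := by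
        intro w hw
        by_contra hc
        push_neg at hc
        exact hz2 ⟨w, hw, hc.1, hc.2⟩
      by_cases hr : ∃ r, G.Adj q r ∧ r ≠ x1 ∧ r ≠ x2
      · obtain ⟨r, h1, h2, h3⟩ := hr
        exact subB_gadget hδ u q x1 x2 r hux1 hux2 hadjq1 hadjq2 huq hnadjuq hxne
          hNu hNx1 hNx2 h1 h2 h3
      · have hNq : ∀ w, G.Adj q w → w = x1 ∨ w = x2 := by
          intro w hw
          by_contra hc
          push_neg at hc
          exact hr ⟨w, hw, hc.1, hc.2⟩
        exact absurd
          (c4_iso u q x1 x2 hux1 hux2 hadjq1 hadjq2 huq hnadjuq hxne hx12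
            hNu hNq hNx1 hNx2) (hC4 _)


lemma countP_finsetSum {α : Type*} (t : Finset α) (f : α → Multiset (Finset V))
    (p : Finset V → Prop) [DecidablePred p] :
    (∑ a ∈ t, f a).countP p = ∑ a ∈ t, (f a).countP p := by
  classical
  induction t using Finset.cons_induction with
  | empty => simp
  | cons a t ha ih => simp [Finset.sum_insert ha, Multiset.countP_add, ih]

lemma card_finsetSum {α : Type*} (t : Finset α) (f : α → Multiset (Finset V)) :
    Multiset.card (∑ a ∈ t, f a) = ∑ a ∈ t, Multiset.card (f a) := by
  classical
  induction t using Finset.cons_induction with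
  | empty => simp
  | cons a t ha ih => simp [Finset.sum_insert ha, ih]

lemma sum_countP_eq (𝒟 : Multiset (Finset V)) :
    ∑ v : V, 𝒟.countP (fun D => v ∈ D) = (𝒟.map Finset.card).sum := by
  classical
  induction 𝒟 using Multiset.induction with
  | empty => simp
  | cons D s ih =>
    simp only [Multiset.countP_cons, Multiset.map_cons, Multiset.sum_cons,
      Finset.sum_add_distrib, ih]
    have hD : ∑ v : V, (if v ∈ D then 1 else 0) = D.card := by
      rw [Finset.sum_ite_mem, Finset.univ_inter]
      simp
    omega

lemma config_le [Nonempty V] {𝒟 : Multiset (Finset V)} {k s : ℕ}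
    (h : IsConfig G 𝒟 k s) : k ≤ Fintype.card V * s := by
  classical
  obtain ⟨hk, hdom, hcnt⟩ := h
  have h1 : ∀ x ∈ 𝒟.map Finset.card, 1 ≤ x := by
    intro x hx
    obtain ⟨D, hD, rfl⟩ := Multiset.mem_map.1 hx
    by_contra hcard
    have hD0 : D = ∅ := by
      rw [← Finset.card_eq_zero]; omega
    obtain ⟨v⟩ := ‹Nonempty V›
    obtain ⟨w, hw, -⟩ := hdom D hD v (by simp [hD0])
    simp [hD0] at hw
  have h2 : Multiset.card (𝒟.map Finset.card) • 1 ≤ (𝒟.map Finset.card).sum :=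
    Multiset.card_nsmul_le_sum h1
  have h3 : (𝒟.map Finset.card).sum = ∑ v : V, 𝒟.countP (fun D => v ∈ D) :=
    (sum_countP_eq 𝒟).symm
  have h4 : ∑ v : V, 𝒟.countP (fun D => v ∈ D) ≤ ∑ _v : V, s :=
    Finset.sum_le_sum (fun v _ => hcnt v)
  simp only [Multiset.card_map, smul_eq_mul, mul_one] at h2
  simp only [Finset.sum_const, Finset.card_univ, smul_eq_mul] at h4
  omega

lemma card_le_countP_add {p q : Finset V → Prop} [DecidablePred p] [DecidablePred q]
    (𝒟 : Multiset (Finset V)) (h : ∀ D ∈ 𝒟, p D ∨ q D) :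
    Multiset.card 𝒟 ≤ 𝒟.countP p + 𝒟.countP q := by
  classical
  induction 𝒟 using Multiset.induction with
  | empty => simp
  | cons D s ih =>
    have hs := ih (fun D hD => h D (Multiset.mem_cons_of_mem hD))
    have hD := h D (Multiset.mem_cons_self _ _)
    simp only [Multiset.card_cons, Multiset.countP_cons]
    rcases hD with hp | hq
    · rw [if_pos hp]; split_ifs <;> omega
    · rw [if_pos hq]; split_ifs <;> omega

lemma two_mul_card_le (𝒟 : Multiset (Finset V)) (a0 a1 a2 a3 : V)
    (h : ∀ D ∈ 𝒟, 2 ≤ (if a0 ∈ D then 1 else 0) + (if a1 ∈ D then 1 else 0)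
        + (if a2 ∈ D then 1 else 0) + (if a3 ∈ D then 1 else 0)) :
    2 * Multiset.card 𝒟 ≤ 𝒟.countP (fun D => a0 ∈ D) + 𝒟.countP (fun D => a1 ∈ D)
      + 𝒟.countP (fun D => a2 ∈ D) + 𝒟.countP (fun D => a3 ∈ D) := by
  classical
  induction 𝒟 using Multiset.induction with
  | empty => simp
  | cons D s ih =>
    have hs := ih (fun D hD => h D (Multiset.mem_cons_of_mem hD))
    have hD := h D (Multiset.mem_cons_self _ _)
    simp only [Multiset.card_cons, Multiset.countP_cons]
    split_ifs at hD ⊢ <;> omega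

lemma backward [Nonempty V] (hδ : ∀ v : V, 2 ≤ (G.neighborSet v).ncard)
    (hC4 : ∀ c : G.ConnectedComponent, ¬ Nonempty (G.induce c.supp ≃g cycleGraph 4)) :
    2 < fracDomatic G := by
  classical
  have hgad : ∀ u : V, GadgetAt G u := fun u => gadget_at hδ hC4 u
  choose M hMcard hMdom hMload hMloadu using hgad
  set n := Fintype.card V with hn
  have hn1 : 1 ≤ n := Fintype.card_pos
  set 𝒟 : Multiset (Finset V) := ∑ u : V, M u with h𝒟
  have hcard : Multiset.card 𝒟 = 4 * n := by
    rw [h𝒟, card_finsetSum]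
    simp only [hMcard, Finset.sum_const, Finset.card_univ, smul_eq_mul]
    omega
  have hdom : ∀ D ∈ 𝒟, Dominating G D := by
    intro D hD
    rw [h𝒟, Multiset.mem_sum] at hD
    obtain ⟨u, -, hu⟩ := hD
    exact hMdom u D hu
  have hcount : ∀ v : V, 𝒟.countP (fun D => v ∈ D) ≤ 2 * n - 1 := by
    intro v
    rw [h𝒟, countP_finsetSum]
    rw [← Finset.add_sum_erase _ _ (Finset.mem_univ v)]
    have hb : ∑ u ∈ Finset.univ.erase v, (M u).countP (fun D => v ∈ D) ≤
        ∑ _u ∈ Finset.univ.erase v, 2 :=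
      Finset.sum_le_sum (fun u _ => hMload u v)
    have hv := hMloadu v
    simp only [Finset.sum_const, smul_eq_mul,
      Finset.card_erase_of_mem (Finset.mem_univ v), Finset.card_univ, ← hn] at hb
    omega
  have hs1 : 0 < 2 * n - 1 := by omega
  have hconfig : IsConfig G 𝒟 (4 * n) (2 * n - 1) := ⟨hcard, hdom, hcount⟩
  have hmem : ((4 * n : ℕ) : ℝ) / ((2 * n - 1 : ℕ) : ℝ) ∈
      {x : ℝ | ∃ k s : ℕ, 0 < s ∧ (∃ 𝒟 : Multiset (Finset V), IsConfig G 𝒟 k s) ∧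
        x = (k : ℝ) / (s : ℝ)} := ⟨4 * n, 2 * n - 1, hs1, ⟨𝒟, hconfig⟩, rfl⟩
  have hbdd : BddAbove {x : ℝ | ∃ k s : ℕ, 0 < s ∧
      (∃ 𝒟 : Multiset (Finset V), IsConfig G 𝒟 k s) ∧ x = (k : ℝ) / (s : ℝ)} := by
    refine ⟨(n : ℝ), ?_⟩
    rintro x ⟨k, s, hs, ⟨𝒟', hconf⟩, rfl⟩
    have hks : k ≤ n * s := config_le hconf
    have hspos : (0 : ℝ) < (s : ℝ) := by exact_mod_cast hs
    rw [div_le_iff₀ hspos]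
    exact_mod_cast hks
  have hlt : (2 : ℝ) < ((4 * n : ℕ) : ℝ) / ((2 * n - 1 : ℕ) : ℝ) := by
    have hpos : (0 : ℝ) < ((2 * n - 1 : ℕ) : ℝ) := by exact_mod_cast hs1
    rw [lt_div_iff₀ hpos]
    have hcast : ((2 * n - 1 : ℕ) : ℝ) = 2 * (n : ℝ) - 1 := by
      have : (1 : ℕ) ≤ 2 * n := by omega
      push_cast [Nat.cast_sub this]
      ring
    have hcast2 : ((4 * n : ℕ) : ℝ) = 4 * (n : ℝ) := by push_cast; ring
    have hnR : (1 : ℝ) ≤ (n : ℝ) := by exact_mod_cast hn1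
    rw [hcast, hcast2]
    linarith
  exact lt_of_lt_of_le hlt (le_csSup hbdd hmem)

lemma forward_bound_deg [Nonempty V] {v : V} (hv : (G.neighborSet v).ncard ≤ 1)
    {𝒟 : Multiset (Finset V)} {k s : ℕ} (h : IsConfig G 𝒟 k s) : k ≤ 2 * s := by
  classical
  obtain ⟨hk, hdom, hcnt⟩ := h
  rcases Nat.le_one_iff_eq_zero_or_eq_one.1 hv with h0 | h1
  · have hns : G.neighborSet v = ∅ := (Set.ncard_eq_zero (Set.toFinite _)).1 h0
    have hall : ∀ D ∈ 𝒟, v ∈ D := by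
      intro D hD
      by_contra hvD
      obtain ⟨w, -, hw⟩ := hdom D hD v hvD
      have : w ∈ G.neighborSet v := hw
      rw [hns] at this
      exact this
    have : 𝒟.countP (fun D => v ∈ D) = Multiset.card 𝒟 :=
      Multiset.countP_eq_card.2 hall
    have := hcnt v
    omega
  · obtain ⟨w, hw⟩ := Set.ncard_eq_one.1 h1
    have hall : ∀ D ∈ 𝒟, v ∈ D ∨ w ∈ D := by
      intro D hD
      by_cases hvD : v ∈ D
      · exact Or.inl hvD
      · obtain ⟨y, hyD, hy⟩ := hdom D hD v hvD
        have : y ∈ G.neighborSet v := hy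
        rw [hw, Set.mem_singleton_iff] at this
        exact Or.inr (this ▸ hyD)
    have h2 := card_le_countP_add 𝒟 hall
    have hv' := hcnt v
    have hw' := hcnt w
    omega

lemma forward_bound_c4 {c : G.ConnectedComponent}
    (e : G.induce c.supp ≃g cycleGraph 4)
    {𝒟 : Multiset (Finset V)} {k s : ℕ} (h : IsConfig G 𝒟 k s) : k ≤ 2 * s := by
  classical
  obtain ⟨hk, hdom, hcnt⟩ := h
  set a : Fin 4 → V := fun i => ((e.symm i : ↥c.supp) : V) with ha
  have amem : ∀ i, a i ∈ c.supp := fun i => (e.symm i).2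
  have hadj : ∀ i j : Fin 4, (cycleGraph 4).Adj i j ↔ G.Adj (a i) (a j) := by
    intro i j
    rw [← e.symm.map_rel_iff]
    exact Iff.rfl
  have hclosed : ∀ w ∈ c.supp, ∀ y, G.Adj w y → y ∈ c.supp := by
    intro w hw y hy
    rw [ConnectedComponent.mem_supp_iff] at hw ⊢
    rw [← hw]
    exact (SimpleGraph.ConnectedComponent.connectedComponentMk_eq_of_adj hy.symm)
  have hsurj : ∀ w ∈ c.supp, ∃ i, a i = w := by
    intro w hw
    refine ⟨e ⟨w, hw⟩, ?_⟩
    rw [ha]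
    simp
  have hcov : ∀ D, Dominating G D → ∀ i : Fin 4,
      ∃ j : Fin 4, (j = i ∨ (cycleGraph 4).Adj i j) ∧ a j ∈ D := by
    intro D hD i
    by_cases hmem : a i ∈ D
    · exact ⟨i, Or.inl rfl, hmem⟩
    · obtain ⟨w, hwD, hw⟩ := hD (a i) hmem
      obtain ⟨j, rfl⟩ := hsurj w (hclosed _ (amem i) _ hw)
      exact ⟨j, Or.inr ((hadj i j).2 hw), hwD⟩
  have h2 : ∀ D ∈ 𝒟, 2 ≤ (if a 0 ∈ D then 1 else 0) + (if a 1 ∈ D then 1 else 0)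
      + (if a 2 ∈ D then 1 else 0) + (if a 3 ∈ D then 1 else 0) := by
    intro D hD
    have hc0 : a 0 ∈ D ∨ a 1 ∈ D ∨ a 3 ∈ D := by
      obtain ⟨j, hj, hjD⟩ := hcov D (hdom D hD) 0
      have hdec : ∀ j' : Fin 4, (j' = 0 ∨ (cycleGraph 4).Adj 0 j') → (j' = 0 ∨ j' = 1 ∨ j' = 3) := by decide
      have : j = 0 ∨ j = 1 ∨ j = 3 := hdec j hj
      rcases this with rfl | rfl | rfl
      · exact Or.inl hjD
      · exact Or.inr (Or.inl hjD)
      · exact Or.inr (Or.inr hjD)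
    have hc1 : a 1 ∈ D ∨ a 0 ∈ D ∨ a 2 ∈ D := by
      obtain ⟨j, hj, hjD⟩ := hcov D (hdom D hD) 1
      have hdec : ∀ j' : Fin 4, (j' = 1 ∨ (cycleGraph 4).Adj 1 j') → (j' = 1 ∨ j' = 0 ∨ j' = 2) := by decide
      have : j = 1 ∨ j = 0 ∨ j = 2 := hdec j hj
      rcases this with rfl | rfl | rfl
      · exact Or.inl hjD
      · exact Or.inr (Or.inl hjD)
      · exact Or.inr (Or.inr hjD)
    have hc2 : a 2 ∈ D ∨ a 1 ∈ D ∨ a 3 ∈ D := by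
      obtain ⟨j, hj, hjD⟩ := hcov D (hdom D hD) 2
      have hdec : ∀ j' : Fin 4, (j' = 2 ∨ (cycleGraph 4).Adj 2 j') → (j' = 2 ∨ j' = 1 ∨ j' = 3) := by decide
      have : j = 2 ∨ j = 1 ∨ j = 3 := hdec j hj
      rcases this with rfl | rfl | rfl
      · exact Or.inl hjD
      · exact Or.inr (Or.inl hjD)
      · exact Or.inr (Or.inr hjD)
    have hc3 : a 3 ∈ D ∨ a 0 ∈ D ∨ a 2 ∈ D := by
      obtain ⟨j, hj, hjD⟩ := hcov D (hdom D hD) 3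
      have hdec : ∀ j' : Fin 4, (j' = 3 ∨ (cycleGraph 4).Adj 3 j') → (j' = 3 ∨ j' = 0 ∨ j' = 2) := by decide
      have : j = 3 ∨ j = 0 ∨ j = 2 := hdec j hj
      rcases this with rfl | rfl | rfl
      · exact Or.inl hjD
      · exact Or.inr (Or.inl hjD)
      · exact Or.inr (Or.inr hjD)
    by_cases m0 : a 0 ∈ D <;> by_cases m1 : a 1 ∈ D <;>
      by_cases m2 : a 2 ∈ D <;> by_cases m3 : a 3 ∈ D <;>
      simp_all
  have hle := two_mul_card_le 𝒟 (a 0) (a 1) (a 2) (a 3) h2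
  have h0 := hcnt (a 0)
  have h1 := hcnt (a 1)
  have h2' := hcnt (a 2)
  have h3 := hcnt (a 3)
  omega


end FracDomAux

theorem stmt_2 {V : Type*} [Fintype V] [DecidableEq V] [Nonempty V] (G : SimpleGraph V) :
    2 < fracDomatic G ↔
      ((∀ v : V, 2 ≤ (G.neighborSet v).ncard) ∧
        ∀ c : G.ConnectedComponent, ¬ Nonempty (G.induce c.supp ≃g cycleGraph 4)) := by
  classical
  constructor
  · intro h
    have h0S : (0 : ℝ) ∈ {x : ℝ | ∃ k s : ℕ, 0 < s ∧
        (∃ 𝒟 : Multiset (Finset V), IsConfig G 𝒟 k s) ∧ x = (k : ℝ) / (s : ℝ)} := by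
      refine ⟨0, 1, one_pos, ⟨0, ?_, ?_, ?_⟩, by norm_num⟩
      · simp
      · intro D hD; simp at hD
      · intro v; simp
    have hbound : ∀ bnd : (∀ (𝒟 : Multiset (Finset V)) (k s : ℕ),
        IsConfig G 𝒟 k s → k ≤ 2 * s), False := by
      intro bnd
      have hle : fracDomatic G ≤ 2 := by
        apply csSup_le ⟨0, h0S⟩
        rintro x ⟨k, s, hs, ⟨𝒟, hconf⟩, rfl⟩
        have hks : k ≤ 2 * s := bnd 𝒟 k s hconf
        have hspos : (0 : ℝ) < (s : ℝ) := by exact_mod_cast hs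
        rw [div_le_iff₀ hspos]
        exact_mod_cast hks
      exact absurd h (not_lt.2 hle)
    constructor
    · intro v
      by_contra hv
      exact hbound (fun 𝒟 k s hconf =>
        FracDomAux.forward_bound_deg (G := G) (v := v) (by omega) hconf)
    · intro c
      rintro ⟨e⟩
      exact hbound (fun 𝒟 k s hconf => FracDomAux.forward_bound_c4 e hconf)
  · rintro ⟨h1, h2⟩
    exact FracDomAux.backward h1 h2
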